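/- Let p be an odd prime, n ≥ 1, c ∈ F_{p^n} with c ≠ 0, 1, 4, 4^{-1}, and suppose c² - 4c is a square in F_{p^n} or 1 - 4c is a square in F_{p^n}. Then the c-differential uniformity of F(x) = x^{p^n-2} is 3. -/

import Mathlib

open Polynomial Finset

theorem stmt_18 {p n : ℕ} (hp : p.Prime) (hodd : Odd p) (hn : 0 < n)
    {K : Type*} [Field K] [Fintype K] (hK : Fintype.card K = p ^ n)
    (c : K) (hc0 : c ≠ 0) (hc1 : c ≠ 1) (hc4 : c ≠ 4) (hc4' : c ≠ 4⁻¹)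
    (hsq : IsSquare (c ^ 2 - 4 * c) ∨ IsSquare (1 - 4 * c))
    (F : K → K) (hF : ∀ x, F x = x ^ (p ^ n - 2)) :
    (∀ a b : K, Nat.card {x : K // F (x + a) - c * F x = b} ≤ 3) ∧
      (∃ a b : K, Nat.card {x : K // F (x + a) - c * F x = b} = 3) := by
  classical
  have hp3 : 3 ≤ p := by
    have h2 := hp.two_le
    rcases Nat.lt_or_ge p 3 with h | h
    · interval_cases p
      · exact absurd hodd (by decide)
    · exact h
  have hq3 : 3 ≤ p ^ n := le_trans hp3 (Nat.le_self_pow hn.ne' p)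
  have hFinv : ∀ x : K, F x = x⁻¹ := by
    intro x
    rw [hF]
    rcases eq_or_ne x 0 with rfl | hx
    · rw [zero_pow (by omega), inv_zero]
    · have h1 : x ^ (p ^ n - 1) = 1 := by
        rw [← hK]; exact FiniteField.pow_card_sub_one_eq_one x hx
      have h2 : x ^ (p ^ n - 2) * x = 1 := by
        rw [← pow_succ]
        convert h1 using 2
        omega
      exact eq_inv_of_mul_eq_one_left h2
  have hp0 : (p : K) = 0 := by
    have h := FiniteField.cast_card_eq_zero K
    rw [hK] at h
    push_cast at h
    exact pow_eq_zero_iff hn.ne' |>.mp h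
  have h2 : (2 : K) ≠ 0 := by
    obtain ⟨k, hk⟩ := hodd
    intro h
    have : (p : K) = 1 := by rw [hk]; push_cast; rw [h]; ring
    rw [hp0] at this
    exact one_ne_zero this.symm
  constructor
  · intro a b
    have hcard : Nat.card {x : K // F (x + a) - c * F x = b}
        = (univ.filter (fun x : K => F (x + a) - c * F x = b)).card := by
      rw [Nat.card_eq_fintype_card, Fintype.card_subtype]
    rw [hcard]
    set S : Finset K := univ.filter (fun x : K => F (x + a) - c * F x = b) with hS
    set g : K[X] := C b * X ^ 2 + C (a * b - 1 + c) * X + C (c * a) with hg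
    have hgc2 : g.coeff 2 = b := by simp [hg, coeff_one]
    have hgc1 : g.coeff 1 = a * b - 1 + c := by simp [hg]
    have hgc0 : g.coeff 0 = c * a := by simp [hg]
    have hg0 : g ≠ 0 := by
      rcases eq_or_ne b 0 with hb | hb
      · rcases eq_or_ne a 0 with ha | ha
        · intro h
          rw [h] at hgc1
          simp [hb, ha] at hgc1
          exact hc1 (by linear_combination -hgc1)
        · intro h
          rw [h] at hgc0
          simp at hgc0
          rcases hgc0 with h' | h' <;> [exact hc0 h'; exact ha h']
      · intro h
        rw [h] at hgc2
        simp at hgc2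
        exact hb hgc2.symm
    have hsub : S ⊆ (S ∩ {0, -a}) ∪ g.roots.toFinset := by
      intro x hx
      by_cases hx0 : x = 0 ∨ x = -a
      · exact Finset.mem_union_left _ (Finset.mem_inter.mpr ⟨hx, by simpa using hx0⟩)
      · push_neg at hx0
        obtain ⟨hx0, hxa⟩ := hx0
        apply Finset.mem_union_right
        rw [Multiset.mem_toFinset, mem_roots hg0]
        have hxa' : x + a ≠ 0 := fun h => hxa (eq_neg_of_add_eq_zero_left h)
        have heq : (x + a)⁻¹ - c * x⁻¹ = b := by
          have := (Finset.mem_filter.mp hx).2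
          rwa [hFinv, hFinv] at this
        rw [IsRoot, hg]
        field_simp at heq
        simp only [eval_add, eval_mul, eval_C, eval_pow, eval_X]
        linear_combination -heq
    have h1 : (S ∩ {0, -a}).card ≤ 1 := by
      apply Finset.card_le_one.mpr
      intro x hx y hy
      have hmem : ∀ z ∈ S ∩ ({0, -a} : Finset K), z = 0 ∨ z = -a := by
        intro z hz
        simpa using (Finset.mem_inter.mp hz).2
      have hval : ∀ z ∈ S ∩ ({0, -a} : Finset K), F (z + a) - c * F z = b := by
        intro z hz
        exact (Finset.mem_filter.mp (Finset.mem_inter.mp hz).1).2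
      rcases eq_or_ne a 0 with ha | ha
      · have hx' := hmem x hx
        have hy' := hmem y hy
        rw [ha, neg_zero, or_self] at hx' hy'
        rw [hx', hy']
      · by_contra hxy
        have key : (0 : K) ∈ S ∩ ({0, -a} : Finset K) ∧ (-a) ∈ S ∩ ({0, -a} : Finset K) := by
          rcases hmem x hx with h | h <;> rcases hmem y hy with h' | h'
          · exact absurd (h.trans h'.symm) hxy
          · exact ⟨h ▸ hx, h' ▸ hy⟩
          · exact ⟨h' ▸ hy, h ▸ hx⟩
          · exact absurd (h.trans h'.symm) hxy
        have e1 : a⁻¹ = b := by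
          have := hval 0 key.1
          rw [hFinv, hFinv] at this
          simpa using this
        have e2 : c * a⁻¹ = b := by
          have := hval (-a) key.2
          rw [hFinv, hFinv] at this
          simp only [neg_add_cancel, inv_neg, inv_zero] at this
          linear_combination this
        have : (c - 1) * a⁻¹ = 0 := by linear_combination e2 - e1
        rcases mul_eq_zero.mp this with h | h
        · exact hc1 (by linear_combination h)
        · exact ha (by simpa using inv_eq_zero.mp h)
    have h2' : g.roots.toFinset.card ≤ 2 := by
      calc g.roots.toFinset.card ≤ Multiset.card g.roots := Multiset.toFinset_card_le _
      _ ≤ g.natDegree := card_roots' g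
      _ ≤ 2 := natDegree_quadratic_le
    calc S.card ≤ ((S ∩ {0, -a}) ∪ g.roots.toFinset).card := Finset.card_le_card hsub
    _ ≤ (S ∩ {0, -a}).card + g.roots.toFinset.card := Finset.card_union_le _ _
    _ ≤ 1 + 2 := add_le_add h1 h2'
    _ = 3 := rfl
  · rcases hsq with ⟨s, hs⟩ | ⟨s, hs⟩
    · refine ⟨1, 1, ?_⟩
      have hs0 : s ≠ 0 := by
        intro h
        rw [h, mul_zero] at hs
        have : c * (c - 4) = 0 := by linear_combination hs
        rcases mul_eq_zero.mp this with h' | h'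
        · exact hc0 h'
        · exact hc4 (by linear_combination h')
      obtain ⟨r1, r2, key, hner⟩ : ∃ r1 r2 : K,
          (∀ x : K, (x - r1) * (x - r2) = x ^ 2 + c * x + c) ∧ r1 ≠ r2 := by
        refine ⟨(-c + s) / 2, (-c - s) / 2, ?_, ?_⟩
        · intro x
          field_simp
          ring_nf
          linear_combination hs
        · intro h
          rw [div_eq_div_iff h2 h2] at h
          have h4 : (2:K) * (2 * s) = 0 := by linear_combination h
          rcases mul_eq_zero.mp h4 with h' | h'
          · exact h2 h'
          · rcases mul_eq_zero.mp h' with h'' | h''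
            · exact h2 h''
            · exact hs0 h''
      have hquad1 : r1 ^ 2 + c * r1 + c = 0 := by rw [← key r1]; ring
      have hquad2 : r2 ^ 2 + c * r2 + c = 0 := by rw [← key r2]; ring
      have hr10 : r1 ≠ 0 := by
        intro h; rw [h] at hquad1; exact hc0 (by linear_combination hquad1)
      have hr20 : r2 ≠ 0 := by
        intro h; rw [h] at hquad2; exact hc0 (by linear_combination hquad2)
      have hr1m : r1 ≠ -1 := by
        intro h; rw [h] at hquad1; exact one_ne_zero (by linear_combination hquad1 : (1:K) = 0)
      have hr2m : r2 ≠ -1 := by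
        intro h; rw [h] at hquad2; exact one_ne_zero (by linear_combination hquad2 : (1:K) = 0)
      have hcard : Nat.card {x : K // F (x + 1) - c * F x = 1}
          = (univ.filter (fun x : K => F (x + 1) - c * F x = 1)).card := by
        rw [Nat.card_eq_fintype_card, Fintype.card_subtype]
      rw [hcard]
      have hset : (univ.filter (fun x : K => F (x + 1) - c * F x = 1)) = {0, r1, r2} := by
        ext x
        simp only [Finset.mem_filter, Finset.mem_univ, true_and, Finset.mem_insert,
          Finset.mem_singleton, hFinv]
        constructor
        · intro hx
          by_cases hx0 : x = 0
          · exact Or.inl hx0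
          by_cases hxm : x = -1
          · exfalso
            rw [hxm] at hx
            simp only [neg_add_cancel, inv_zero, inv_neg, inv_one] at hx
            exact hc1 (by linear_combination hx)
          · have hx1 : x + 1 ≠ 0 := fun h => hxm (eq_neg_of_add_eq_zero_left h)
            field_simp at hx
            have : (x - r1) * (x - r2) = 0 := by
              rw [key]
              linear_combination -hx
            rcases mul_eq_zero.mp this with h | h
            · exact Or.inr (Or.inl (by linear_combination h))
            · exact Or.inr (Or.inr (by linear_combination h))
        · intro hx
          have h1 : r1 + 1 ≠ 0 := fun h => hr1m (eq_neg_of_add_eq_zero_left h)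
          have h2' : r2 + 1 ≠ 0 := fun h => hr2m (eq_neg_of_add_eq_zero_left h)
          rcases hx with rfl | h | h
          · norm_num
          · rw [h]
            field_simp
            linear_combination -hquad1
          · rw [h]
            field_simp
            linear_combination -hquad2
      rw [hset]
      rw [Finset.card_insert_of_notMem (by simp [Ne.symm hr10, Ne.symm hr20]),
        Finset.card_insert_of_notMem (by simpa using hner), Finset.card_singleton]
    · refine ⟨1, c, ?_⟩
      have h4 : (4:K) ≠ 0 := by
        intro h
        have : (2:K) * 2 = 0 := by linear_combination h
        rcases mul_eq_zero.mp this with h' | h' <;> exact h2 h'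
      have hs0 : s ≠ 0 := by
        intro h
        rw [h, mul_zero] at hs
        apply hc4'
        field_simp
        linear_combination -hs
      have h2c : (2:K) * c ≠ 0 := mul_ne_zero h2 hc0
      obtain ⟨r1, r2, key, hner⟩ : ∃ r1 r2 : K,
          (∀ x : K, c * ((x - r1) * (x - r2)) = c * x ^ 2 + (2 * c - 1) * x + c) ∧ r1 ≠ r2 := by
        refine ⟨((1 - 2 * c) + s) / (2 * c), ((1 - 2 * c) - s) / (2 * c), ?_, ?_⟩
        · intro x
          field_simp
          ring_nf
          linear_combination hs
        · intro h
          rw [div_eq_div_iff h2c h2c] at h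
          have hh : (2:K) * (c * (2 * s)) = 0 := by linear_combination h
          rcases mul_eq_zero.mp hh with h' | h'
          · exact h2 h'
          rcases mul_eq_zero.mp h' with h' | h'
          · exact hc0 h'
          rcases mul_eq_zero.mp h' with h' | h'
          · exact h2 h'
          · exact hs0 h'
      have hquad1 : c * r1 ^ 2 + (2 * c - 1) * r1 + c = 0 := by rw [← key r1]; ring
      have hquad2 : c * r2 ^ 2 + (2 * c - 1) * r2 + c = 0 := by rw [← key r2]; ring
      have hr10 : r1 ≠ 0 := by
        intro h; rw [h] at hquad1; exact hc0 (by linear_combination hquad1)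
      have hr20 : r2 ≠ 0 := by
        intro h; rw [h] at hquad2; exact hc0 (by linear_combination hquad2)
      have hr1m : r1 ≠ -1 := by
        intro h; rw [h] at hquad1; exact one_ne_zero (by linear_combination hquad1 : (1:K) = 0)
      have hr2m : r2 ≠ -1 := by
        intro h; rw [h] at hquad2; exact one_ne_zero (by linear_combination hquad2 : (1:K) = 0)
      have hcard : Nat.card {x : K // F (x + 1) - c * F x = c}
          = (univ.filter (fun x : K => F (x + 1) - c * F x = c)).card := by
        rw [Nat.card_eq_fintype_card, Fintype.card_subtype]
      rw [hcard]
      have hset : (univ.filter (fun x : K => F (x + 1) - c * F x = c)) = {-1, r1, r2} := by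
        ext x
        simp only [Finset.mem_filter, Finset.mem_univ, true_and, Finset.mem_insert,
          Finset.mem_singleton, hFinv]
        constructor
        · intro hx
          by_cases hxm : x = -1
          · exact Or.inl hxm
          by_cases hx0 : x = 0
          · exfalso
            rw [hx0] at hx
            simp only [zero_add, inv_one, inv_zero, mul_zero, sub_zero] at hx
            exact hc1 hx.symm
          · have hx1 : x + 1 ≠ 0 := fun h => hxm (eq_neg_of_add_eq_zero_left h)
            field_simp at hx
            have hz : c * ((x - r1) * (x - r2)) = 0 := by
              rw [key]
              linear_combination -hx
            rcases mul_eq_zero.mp hz with h | h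
            · exact absurd h hc0
            rcases mul_eq_zero.mp h with h | h
            · exact Or.inr (Or.inl (by linear_combination h))
            · exact Or.inr (Or.inr (by linear_combination h))
        · intro hx
          have h1 : r1 + 1 ≠ 0 := fun h => hr1m (eq_neg_of_add_eq_zero_left h)
          have h2' : r2 + 1 ≠ 0 := fun h => hr2m (eq_neg_of_add_eq_zero_left h)
          rcases hx with rfl | h | h
          · norm_num
          · rw [h]
            field_simp
            linear_combination -hquad1
          · rw [h]
            field_simp
            linear_combination -hquad2
      rw [hset]
      rw [Finset.card_insert_of_notMem (by simp [Ne.symm hr1m, Ne.symm hr2m]),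
        Finset.card_insert_of_notMem (by simpa using hner), Finset.card_singleton]
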